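/- Srinivas–Trivedi-type bound: Let (A,𝔪) be a Noetherian local ring of dimension d ≥ 1 and J an ideal generated by a system of parameters contained in 𝔪. Then the Hilbert function of A satisfies h_A(n) = λ(𝔪ⁿ/𝔪^{n+1}) ≤ λ(A/J)·C(n + d - 2, d - 1) + C(n + d - 2, d - 2) for all n ≥ 0. -/

import Mathlib

open Order IsLocalRing

section OrderAux
variable {α β γ : Type*} [Preorder α] [Preorder β] [Preorder γ]


variable {α β γ : Type*} [Preorder α] [Preorder β] [Preorder γ]

lemma auxProj : ∀ (n : ℕ) (p : LTSeries (α × β)), p.length = n →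
    ∃ (q : LTSeries α) (r : LTSeries β), q.last ≤ p.last.1 ∧ r.last ≤ p.last.2 ∧
      p.length ≤ q.length + r.length
  | 0, p, _ => ⟨RelSeries.singleton _ p.last.1, RelSeries.singleton _ p.last.2,
      le_rfl, le_rfl, by omega⟩
  | (n+1), p, hn => by
    obtain ⟨q, r, hq, hr, hlen⟩ := auxProj n p.eraseLast (by simp [hn])
    have hstep : p.eraseLast.last < p.last := p.eraseLast_last_rel_last (by omega)
    have hlen' : p.eraseLast.length = p.length - 1 := by simp
    rcases Prod.lt_iff.mp hstep with ⟨h1, h2⟩ | ⟨h1, h2⟩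
    · refine ⟨q.snoc p.last.1 (lt_of_le_of_lt hq h1), r, by simp, le_trans hr h2, ?_⟩
      simp only [RelSeries.snoc_length]
      omega
    · refine ⟨q, r.snoc p.last.2 (lt_of_le_of_lt hr h2), le_trans hq h1, by simp, ?_⟩
      simp only [RelSeries.snoc_length]
      omega

lemma auxKrullDimProdLe : krullDim (α × β) ≤ krullDim α + krullDim β := by
  refine iSup_le fun p => ?_
  obtain ⟨q, r, -, -, hlen⟩ := auxProj p.length p rfl
  calc (p.length : WithBot ℕ∞) ≤ ((q.length + r.length : ℕ) : WithBot ℕ∞) := by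
        exact_mod_cast hlen
    _ = (q.length : WithBot ℕ∞) + (r.length : WithBot ℕ∞) := by push_cast; rfl
    _ ≤ krullDim α + krullDim β :=
        add_le_add (LTSeries.length_le_krullDim q) (LTSeries.length_le_krullDim r)


variable {α β γ : Type*} [Preorder α] [Preorder β] [Preorder γ]

lemma auxConcat (f : α → γ) (g : β → γ) (hf : StrictMono f) (hg : StrictMono g)
    (hfg : ∀ a b, f a ≤ g b) : krullDim α + krullDim β ≤ krullDim γ := by
  rcases isEmpty_or_nonempty α with hα | hα
  · rw [krullDim_eq_bot (α := α), WithBot.bot_add]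
    exact bot_le
  rcases isEmpty_or_nonempty β with hβ | hβ
  · rw [krullDim_eq_bot (α := β), WithBot.add_bot]
    exact bot_le
  have hγ : Nonempty γ := ⟨f (Classical.arbitrary α)⟩
  have key : ∀ (p : LTSeries α) (q : LTSeries β),
      ((p.length + q.length : ℕ) : ℕ∞) ≤ ⨆ (s : LTSeries γ), (s.length : ℕ∞) := by
    intro p q
    by_cases hq : q.length = 0
    · refine le_trans ?_ (le_iSup _ (LTSeries.map p f hf))
      simp [hq]
    · have h01 : q.head < q 1 := by
        have h := q.strictMono
        apply h
        rw [Fin.lt_def, Fin.val_one']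
        simp only [Fin.val_zero]
        rw [Nat.mod_eq_of_lt (by omega)]
        omega
      have hconn : f p.last < g ((q.tail hq).head) := by
        rw [RelSeries.head_tail]
        exact lt_of_le_of_lt (hfg p.last q.head) (hg h01)
      refine le_trans ?_
        (le_iSup _ ((LTSeries.map p f hf).append (LTSeries.map (q.tail hq) g hg) hconn))
      have hL : ((LTSeries.map p f hf).append (LTSeries.map (q.tail hq) g hg) hconn).length
          = p.length + (q.length - 1) + 1 := by
        simp [RelSeries.append]
      rw [hL]
      have : p.length + (q.length - 1) + 1 = p.length + q.length := by omega
      rw [this]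
  rw [krullDim_eq_iSup_length (α := α), krullDim_eq_iSup_length (α := β),
    krullDim_eq_iSup_length (α := γ), ← WithBot.coe_add]
  rw [WithBot.coe_le_coe]
  rw [ENat.iSup_add]
  refine iSup_le fun p => ?_
  rw [ENat.add_iSup]
  refine iSup_le fun q => ?_
  exact_mod_cast key p q

end OrderAux



lemma auxKrullDimSimple {α : Type*} [PartialOrder α] [BoundedOrder α] [IsSimpleOrder α] :
    krullDim α = 1 := by
  apply le_antisymm
  · refine iSup_le fun p => ?_
    have hlen : p.length ≤ 1 := by
      by_contra hl
      push_neg at hl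
      have h0 : p 0 < p 1 := p.strictMono (by
        rw [Fin.lt_def, Fin.val_one']
        simp only [Fin.val_zero]
        rw [Nat.mod_eq_of_lt (by omega)]
        omega)
      have h1 : p 1 < p ⟨2, by omega⟩ := p.strictMono (by
        rw [Fin.lt_def, Fin.val_one']
        rw [Nat.mod_eq_of_lt (by omega)]
        simp)
      rcases eq_bot_or_eq_top (p 1) with h | h
      · rw [h] at h0
        exact not_lt_bot h0
      · rw [h] at h1
        exact not_top_lt h1
    exact_mod_cast hlen
  · have := LTSeries.length_le_krullDim ((RelSeries.singleton (α := α) {(a, b) : α × α | a < b} ⊥).snoc ⊤ bot_lt_top)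
    simpa using this

noncomputable def auxL (A : Type) [CommRing A] (K : Ideal A) : WithBot ℕ∞ :=
  Order.krullDim (Submodule A (A ⧸ K))

variable {A : Type} [CommRing A]

lemma auxL_anti {K K' : Ideal A} (h : K ≤ K') : auxL A K' ≤ auxL A K := by
  have hπ : Function.Surjective (Submodule.mapQ K K' LinearMap.id h) := by
    intro z
    obtain ⟨a, rfl⟩ := Submodule.Quotient.mk_surjective K' z
    exact ⟨Submodule.Quotient.mk a, by rw [Submodule.mapQ_apply]; rfl⟩
  exact krullDim_le_of_strictMono (Submodule.comap (Submodule.mapQ K K' LinearMap.id h))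
    (fun S T hST => (Submodule.comap_lt_comap_iff_of_surjective hπ).mpr hST)

lemma auxL_top : auxL A ⊤ = 0 := by
  have h1 : Subsingleton (A ⧸ (⊤ : Ideal A)) := Submodule.Quotient.subsingleton_iff.mpr rfl
  have h2 : Subsingleton (Submodule A (A ⧸ (⊤ : Ideal A))) := by
    constructor
    intro S T
    have : ∀ (U : Submodule A (A ⧸ (⊤ : Ideal A))), U = ⊥ := fun U => by
      ext x
      simp [Subsingleton.elim x 0]
    rw [this S, this T]
  exact le_antisymm (krullDim_nonpos_of_subsingleton) (krullDim_nonneg)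

lemma auxL_maximal {m : Ideal A} (hm : m.IsMaximal) : auxL A m = 1 := by
  have : IsSimpleModule A (A ⧸ m) := isSimpleModule_iff_isCoatom.mpr (Ideal.isMaximal_def.mp hm)
  exact auxKrullDimSimple



def auxP (ℓ : ℕ) : ℕ → ℕ → ℕ
  | 0, _ => 1
  | 1, n => if n = 0 then 1 else ℓ
  | (m+2), n => if n = 0 then 1 else ℓ * (n + m).choose (m + 1) + (n + m).choose m

lemma auxP_zero (ℓ m : ℕ) : auxP ℓ m 0 = 1 := by
  match m with
  | 0 => rfl
  | 1 => rfl
  | (m+2) => rfl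

lemma auxP_succ (ℓ m n : ℕ) (hm : 1 ≤ m) :
    auxP ℓ (m+1) (n+1) = auxP ℓ (m+1) n + auxP ℓ m (n+1) := by
  match m, hm with
  | 1, _ =>
    cases n with
    | zero => simp [auxP]; ring
    | succ n =>
      simp [auxP, Nat.choose_one_right]
      ring
  | (m+2), _ =>
    cases n with
    | zero =>
      simp only [auxP, Nat.one_ne_zero, if_false, if_true, reduceIte]
      rw [show 1 + (m+1) = m + 2 from by ring, show m + 1 + 1 = m + 2 from rfl,
        Nat.choose_self, show 1 + m = m + 1 from by ring, Nat.choose_self,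
        Nat.choose_succ_self_right, Nat.choose_succ_self_right]
      norm_num
      ring
    | succ n =>
      simp only [auxP, Nat.succ_ne_zero, if_false, reduceIte]
      have e1 : n + 1 + 1 + (m + 1) = (n + 1 + m) + 2 := by ring
      have e2 : n + 1 + 1 + m = (n + 1 + m) + 1 := by ring
      have e3 : n + 1 + (m + 1) = (n + 1 + m) + 1 := by ring
      rw [e1, e2, e3]
      set N := n + 1 + m
      rw [show N + 2 = (N + 1) + 1 from rfl]
      rw [Nat.choose_succ_succ (N+1) (m+1), Nat.choose_succ_succ (N+1) m,
        Nat.choose_succ_succ N m, Nat.choose_succ_succ N (m+1)]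
      ring

lemma auxP_sum (ℓ m : ℕ) (hm : 1 ≤ m) (N : ℕ) :
    (Finset.range (N+1)).sum (auxP ℓ m) = auxP ℓ (m+1) N := by
  induction N with
  | zero => simp [auxP_zero]
  | succ N ih =>
    rw [Finset.sum_range_succ, ih, ← auxP_succ ℓ m N hm]

lemma auxP_one (ℓ n : ℕ) : auxP ℓ 1 (n+1) = ℓ := rfl

lemma auxA (K : Ideal A) (x : A) :
    auxL A K ≤ auxL A (K ⊔ Ideal.span {x}) + auxL A (Submodule.comap (LinearMap.lsmul A A x) K) := by
  set K' := K ⊔ Ideal.span {x} with hK'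
  set C := Submodule.comap (LinearMap.lsmul A A x) K with hCdef
  have hKK' : K ≤ K' := le_sup_left
  set π : (A ⧸ K) →ₗ[A] (A ⧸ K') := Submodule.mapQ K K' LinearMap.id hKK' with hπdef
  set f0 : A →ₗ[A] (A ⧸ K) := (Submodule.mkQ K).comp (LinearMap.lsmul A A x) with hf0
  have hC : C ≤ LinearMap.ker f0 := by
    intro t ht
    simp only [hf0, LinearMap.mem_ker, LinearMap.comp_apply, LinearMap.lsmul_apply,
      Submodule.mkQ_apply, Submodule.Quotient.mk_eq_zero]
    simpa using Submodule.mem_comap.mp ht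
  set μ : (A ⧸ C) →ₗ[A] (A ⧸ K) := Submodule.liftQ C f0 hC with hμdef
  have hμ : ∀ t : A, μ (Submodule.Quotient.mk t) = Submodule.Quotient.mk (x * t) := by
    intro t
    rw [hμdef, Submodule.liftQ_apply, hf0]
    simp [smul_eq_mul]
  have hkerπ : LinearMap.ker π = Submodule.map (Submodule.mkQ K) K' := by
    rw [hπdef, Submodule.mapQ, Submodule.ker_liftQ]
    congr 1
    rw [LinearMap.ker_comp, Submodule.ker_mkQ]
    exact Submodule.comap_id K'
  have hsm : StrictMono (fun S : Submodule A (A ⧸ K) =>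
      ((Submodule.map π S, Submodule.comap μ S) :
        Submodule A (A ⧸ K') × Submodule A (A ⧸ C))) := by
    intro S T hST
    refine lt_of_le_of_ne ⟨Submodule.map_mono hST.le, Submodule.comap_mono hST.le⟩ ?_
    intro heq
    have h1 : Submodule.map π S = Submodule.map π T := congrArg Prod.fst heq
    have h2 : Submodule.comap μ S = Submodule.comap μ T := congrArg Prod.snd heq
    have hTS : T ≤ S := by
      intro u hu
      have hmem : π u ∈ Submodule.map π S := h1 ▸ Submodule.mem_map_of_mem hu
      obtain ⟨c, hc, hcu⟩ := hmem
      have hker : u - c ∈ LinearMap.ker π := by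
        rw [LinearMap.mem_ker, map_sub, hcu, sub_self]
      rw [hkerπ] at hker
      obtain ⟨w, hw, hwu⟩ := hker
      rw [hK'] at hw
      obtain ⟨k, hk, s, hs, rfl⟩ := Submodule.mem_sup.mp hw
      obtain ⟨t, rfl⟩ := Ideal.mem_span_singleton'.mp hs
      have hwu' : Submodule.Quotient.mk (x * t) = u - c := by
        rw [← hwu]
        simp only [Submodule.mkQ_apply, map_add]
        rw [show Submodule.Quotient.mk k = (0 : A ⧸ K) from
          (Submodule.Quotient.mk_eq_zero K).mpr hk]
        rw [zero_add, mul_comm]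
      have hmu : μ (Submodule.Quotient.mk t) ∈ T := by
        rw [hμ t, hwu']
        exact T.sub_mem hu (hST.le hc)
      have : Submodule.Quotient.mk t ∈ Submodule.comap μ S := by
        rw [h2]; exact hmu
      have hxS : Submodule.Quotient.mk (x * t) ∈ S := by
        rw [← hμ t]; exact this
      have : u = c + (u - c) := by ring
      rw [this, ← hwu']
      exact S.add_mem hc hxS
    exact absurd (le_antisymm hTS hST.le).symm hST.ne
  calc auxL A K ≤ krullDim (Submodule A (A ⧸ K') × Submodule A (A ⧸ C)) :=
        krullDim_le_of_strictMono _ hsm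
    _ ≤ auxL A K' + auxL A C := auxKrullDimProdLe


lemma auxSandwich (K K' : Ideal A) (hKK' : K ≤ K') :
    krullDim (Submodule A ((K' : Ideal A) ⧸ (Submodule.comap K'.subtype K))) + auxL A K'
      ≤ auxL A K := by
  set g0 : K' →ₗ[A] (A ⧸ K) := (Submodule.mkQ K).comp K'.subtype with hg0
  have hker : Submodule.comap K'.subtype K = LinearMap.ker g0 := by
    rw [hg0, LinearMap.ker_comp, Submodule.ker_mkQ]
  let e : ((K' : Ideal A) ⧸ (Submodule.comap K'.subtype K)) ≃ₗ[A] LinearMap.range g0 :=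
    (Submodule.quotEquivOfEq _ _ hker).trans g0.quotKerEquivRange
  let f : Submodule A ((K' : Ideal A) ⧸ (Submodule.comap K'.subtype K)) →
      Submodule A (A ⧸ K) :=
    fun S => ((Submodule.MapSubtype.orderIso (LinearMap.range g0))
      ((Submodule.orderIsoMapComap e) S) : { p : Submodule A (A ⧸ K) // p ≤ _ })
  have hfle : ∀ S, f S ≤ LinearMap.range g0 := fun S =>
    ((Submodule.MapSubtype.orderIso (LinearMap.range g0))
      ((Submodule.orderIsoMapComap e) S)).2
  have hf : StrictMono f := by
    intro S T h
    have h1 := (Submodule.orderIsoMapComap e).strictMono h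
    have h2 := (Submodule.MapSubtype.orderIso (LinearMap.range g0)).strictMono h1
    exact h2
  have hπ : Function.Surjective (Submodule.mapQ K K' LinearMap.id hKK') := by
    intro z
    obtain ⟨a, rfl⟩ := Submodule.Quotient.mk_surjective K' z
    exact ⟨Submodule.Quotient.mk a, by rw [Submodule.mapQ_apply]; rfl⟩
  set π := Submodule.mapQ K K' LinearMap.id hKK' with hπdef
  have hg : StrictMono (fun T : Submodule A (A ⧸ K') => Submodule.comap π T) :=
    fun S T hST => (Submodule.comap_lt_comap_iff_of_surjective hπ).mpr hST
  have hrange_ker : LinearMap.range g0 ≤ LinearMap.ker π := by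
    rintro z ⟨w, rfl⟩
    rw [LinearMap.mem_ker, hg0]
    simp only [LinearMap.comp_apply, Submodule.mkQ_apply, Submodule.subtype_apply]
    rw [hπdef, Submodule.mapQ_apply]
    simp only [LinearMap.id_apply]
    exact (Submodule.Quotient.mk_eq_zero K').mpr w.2
  have hfg : ∀ S T, f S ≤ Submodule.comap π T := by
    intro S T
    refine le_trans (hfle S) (le_trans hrange_ker ?_)
    intro z hz
    rw [Submodule.mem_comap, LinearMap.mem_ker.mp hz]
    exact T.zero_mem
  exact auxConcat f _ hf hg hfg


lemma auxClaim {A : Type} [CommRing A] [IsLocalRing A] (ℓ : ℕ) (m : ℕ) (hm : 1 ≤ m) :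
    ∀ (I : Ideal A), I ≤ maximalIdeal A →
    ∀ (y : Fin m → A), (∀ i, y i ∈ maximalIdeal A) →
      auxL A (I ⊔ Ideal.span (Set.range y)) ≤ ((ℓ : ℕ∞) : WithBot ℕ∞) →
    ∀ n : ℕ, auxL A (I ⊔ (maximalIdeal A) ^ (n+1)) ≤
      auxL A (I ⊔ (maximalIdeal A) ^ n) + ((auxP ℓ m n : ℕ∞) : WithBot ℕ∞) := by
  induction m, hm using Nat.le_induction with
  | base =>
    intro I hI y hy hY n
    cases n with
    | zero =>
      rw [pow_one, sup_eq_right.mpr hI, auxL_maximal (maximalIdeal.isMaximal A),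
        pow_zero, Ideal.one_eq_top, sup_top_eq, auxL_top, auxP_zero, zero_add]
      norm_num
    | succ n =>
      have step : auxL A (I ⊔ (maximalIdeal A) ^ (n+2)) ≤
          auxL A ((I ⊔ Ideal.span {y 0}) ⊔ (maximalIdeal A) ^ (n+2)) +
            auxL A (I ⊔ (maximalIdeal A) ^ (n+1)) := by
        refine le_trans (auxA (I ⊔ (maximalIdeal A) ^ (n+2)) (y 0)) (add_le_add ?_ ?_)
        · exact le_of_eq (by rw [sup_right_comm])
        · refine auxL_anti (sup_le ?_ ?_)
          · intro i hi
            exact Submodule.mem_comap.mpr (le_sup_left (α := Ideal A)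
              (Ideal.mul_mem_left _ (y 0) hi : y 0 • i ∈ I))
          · intro u hu
            refine Submodule.mem_comap.mpr (le_sup_right (α := Ideal A) ?_)
            rw [pow_succ']
            exact Ideal.mul_mem_mul (hy 0) hu
      have hbound : auxL A ((I ⊔ Ideal.span {y 0}) ⊔ (maximalIdeal A) ^ (n+2)) ≤
          ((ℓ : ℕ∞) : WithBot ℕ∞) := by
        refine le_trans (auxL_anti ?_) hY
        refine sup_le (le_sup_left.trans le_sup_left) ?_
        refine le_trans (Ideal.span_mono ?_) (le_sup_right.trans le_sup_left)
        rintro z ⟨i, rfl⟩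
        rw [Subsingleton.elim i 0]
        exact rfl
      rw [auxP_one]
      calc auxL A (I ⊔ (maximalIdeal A) ^ (n+2)) ≤ _ + _ := step
        _ ≤ ((ℓ : ℕ∞) : WithBot ℕ∞) + auxL A (I ⊔ (maximalIdeal A) ^ (n+1)) :=
            add_le_add hbound le_rfl
        _ = auxL A (I ⊔ (maximalIdeal A) ^ (n+1)) + ((ℓ : ℕ∞) : WithBot ℕ∞) := add_comm _ _
  | succ m hm ih =>
    intro I hI y hy hY n
    cases n with
    | zero =>
      rw [pow_one, sup_eq_right.mpr hI, auxL_maximal (maximalIdeal.isMaximal A),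
        pow_zero, Ideal.one_eq_top, sup_top_eq, auxL_top, auxP_zero, zero_add]
      norm_num
    | succ n =>
      set I' := I ⊔ Ideal.span {y 0} with hI'def
      have hI' : I' ≤ maximalIdeal A :=
        sup_le hI ((Ideal.span_le).mpr (Set.singleton_subset_iff.mpr (hy 0)))
      have hspan : Ideal.span (Set.range y) =
          Ideal.span {y 0} ⊔ Ideal.span (Set.range (Fin.tail y)) := by
        rw [← Ideal.span_union]
        congr 1
        rw [← Set.insert_eq]
        conv_lhs => rw [← Fin.cons_self_tail y]
        rw [Fin.range_cons]
      have hY' : auxL A (I' ⊔ Ideal.span (Set.range (Fin.tail y))) ≤ ((ℓ : ℕ∞) : WithBot ℕ∞) := by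
        rw [hI'def, sup_assoc, ← hspan]
        exact hY
      have iter : ∀ k : ℕ, auxL A (I' ⊔ (maximalIdeal A) ^ k) ≤
          ((((Finset.range k).sum (auxP ℓ m) : ℕ) : ℕ∞) : WithBot ℕ∞) := by
        intro k
        induction k with
        | zero =>
          rw [pow_zero, Ideal.one_eq_top, sup_top_eq, auxL_top]
          simp
        | succ k ihk =>
          calc auxL A (I' ⊔ (maximalIdeal A) ^ (k+1)) ≤
              auxL A (I' ⊔ (maximalIdeal A) ^ k) + ((auxP ℓ m k : ℕ∞) : WithBot ℕ∞) :=
                ih I' hI' (Fin.tail y) (fun i => hy i.succ) hY' k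
            _ ≤ ((((Finset.range k).sum (auxP ℓ m) : ℕ) : ℕ∞) : WithBot ℕ∞) +
                ((auxP ℓ m k : ℕ∞) : WithBot ℕ∞) := add_le_add ihk le_rfl
            _ = ((((Finset.range (k+1)).sum (auxP ℓ m) : ℕ) : ℕ∞) : WithBot ℕ∞) := by
                rw [Finset.sum_range_succ]
                push_cast
                rfl
      have step : auxL A (I ⊔ (maximalIdeal A) ^ (n+2)) ≤
          auxL A (I' ⊔ (maximalIdeal A) ^ (n+2)) +
            auxL A (I ⊔ (maximalIdeal A) ^ (n+1)) := by
        refine le_trans (auxA (I ⊔ (maximalIdeal A) ^ (n+2)) (y 0)) (add_le_add ?_ ?_)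
        · exact le_of_eq (by rw [hI'def, sup_right_comm])
        · refine auxL_anti (sup_le ?_ ?_)
          · intro i hi
            exact Submodule.mem_comap.mpr (le_sup_left (α := Ideal A)
              (Ideal.mul_mem_left _ (y 0) hi : y 0 • i ∈ I))
          · intro u hu
            refine Submodule.mem_comap.mpr (le_sup_right (α := Ideal A) ?_)
            rw [pow_succ']
            exact Ideal.mul_mem_mul (hy 0) hu
      calc auxL A (I ⊔ (maximalIdeal A) ^ (n+2)) ≤ _ + _ := step
        _ ≤ ((((Finset.range (n+2)).sum (auxP ℓ m) : ℕ) : ℕ∞) : WithBot ℕ∞) +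
            auxL A (I ⊔ (maximalIdeal A) ^ (n+1)) := add_le_add (iter (n+2)) le_rfl
        _ = auxL A (I ⊔ (maximalIdeal A) ^ (n+1)) +
            ((auxP ℓ (m+1) (n+1) : ℕ∞) : WithBot ℕ∞) := by
            rw [auxP_sum ℓ m hm (n+1), add_comm]


lemma auxExtract (x : WithBot ℕ∞) (h0 : 0 ≤ x) (c : ℕ) (hc : x ≤ ((c : ℕ∞) : WithBot ℕ∞)) :
    ∃ k : ℕ, x = ((k : ℕ∞) : WithBot ℕ∞) := by
  cases x with
  | bot => simp at h0
  | coe e =>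
    have he : e ≤ (c : ℕ∞) := WithBot.coe_le_coe.mp hc
    lift e to ℕ using (lt_of_le_of_lt he (WithTop.coe_lt_top c)).ne
    exact ⟨e, rfl⟩

lemma auxP_le (ℓ d n : ℕ) (hd : 1 ≤ d) :
    auxP ℓ d n ≤ ℓ * (n + d - 2).choose (d - 1) + (n + d - 2).choose (d - 2) := by
  match d, hd with
  | 1, _ =>
    have e : (1:ℕ) - 2 = 0 := rfl
    cases n with
    | zero => simp [auxP]
    | succ n =>
      have he : auxP ℓ 1 (n+1) = ℓ := rfl
      have hc : (n + 1 + 1 - 2).choose 0 = 1 := Nat.choose_zero_right _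
      rw [he, hc, mul_one]
      omega
  | (m+2), _ =>
    cases n with
    | zero =>
      have : auxP ℓ (m+2) 0 = 1 := rfl
      rw [this, show 0 + (m+2) - 2 = m by omega, show m + 2 - 1 = m + 1 by omega,
        show m + 2 - 2 = m by omega, Nat.choose_self,
        Nat.choose_eq_zero_of_lt (by omega), mul_zero, zero_add]
    | succ n =>
      have : auxP ℓ (m+2) (n+1) = ℓ * (n + 1 + m).choose (m + 1) + (n + 1 + m).choose m := by
        simp [auxP]
      rw [this, show n + 1 + (m+2) - 2 = n + 1 + m by omega,
        show m + 2 - 1 = m + 1 by omega, show m + 2 - 2 = m by omega]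

/-- **Srinivas–Trivedi-type bound.** For a Noetherian local ring `(A,𝔪)` of
dimension `d ≥ 1` and a parameter ideal `J ⊆ 𝔪`:
`λ(𝔪ⁿ/𝔪ⁿ⁺¹) ≤ λ(A/J)·C(n+d-2, d-1) + C(n+d-2, d-2)` for all `n ≥ 0`.
(Lengths are expressed as the Krull dimension of the submodule lattice.) -/
theorem stmt16 (A : Type) [CommRing A] [IsLocalRing A] [IsNoetherianRing A]
    (d : ℕ) (hd : 1 ≤ d) (hdim : ringKrullDim A = d)
    (a : Fin d → A) (ha : ∀ i, a i ∈ IsLocalRing.maximalIdeal A)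
    (J : Ideal A) (hJ : J = Ideal.span (Set.range a))
    (hsop : J.radical = IsLocalRing.maximalIdeal A)
    (ℓ : ℕ) (hℓ : Order.krullDim (Submodule A (A ⧸ J)) = ((ℓ : ℕ∞) : WithBot ℕ∞))
    (h : ℕ → ℕ)
    (hh : ∀ n : ℕ, Order.krullDim (Submodule A
        ((IsLocalRing.maximalIdeal A ^ n : Ideal A) ⧸
          (Submodule.comap (IsLocalRing.maximalIdeal A ^ n : Ideal A).subtype
            (IsLocalRing.maximalIdeal A ^ (n + 1)))))
      = ((h n : ℕ∞) : WithBot ℕ∞)) :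
    ∀ n : ℕ, h n ≤ ℓ * Nat.choose (n + d - 2) (d - 1) + Nat.choose (n + d - 2) (d - 2) := by
  have hY : auxL A (⊥ ⊔ Ideal.span (Set.range a)) ≤ ((ℓ : ℕ∞) : WithBot ℕ∞) := by
    rw [bot_sup_eq, ← hJ]
    exact le_of_eq hℓ
  have hincr : ∀ n : ℕ, auxL A ((maximalIdeal A) ^ (n+1)) ≤
      auxL A ((maximalIdeal A) ^ n) + ((auxP ℓ d n : ℕ∞) : WithBot ℕ∞) := by
    intro n
    have := auxClaim ℓ d hd ⊥ bot_le a ha hY n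
    rwa [bot_sup_eq, bot_sup_eq] at this
  have hfin : ∀ n : ℕ, ∃ k : ℕ, auxL A ((maximalIdeal A) ^ n) = ((k : ℕ∞) : WithBot ℕ∞) := by
    intro n
    induction n with
    | zero =>
      refine ⟨0, ?_⟩
      rw [pow_zero, Ideal.one_eq_top, auxL_top]
      norm_num
    | succ n ihn =>
      obtain ⟨k, hk⟩ := ihn
      have hb : auxL A ((maximalIdeal A) ^ (n+1)) ≤ (((k + auxP ℓ d n : ℕ) : ℕ∞) : WithBot ℕ∞) := by
        refine le_trans (hincr n) ?_
        rw [hk]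
        push_cast
        rfl
      exact auxExtract _ (krullDim_nonneg) _ hb
  intro n
  obtain ⟨k, hk⟩ := hfin n
  have hsand : ((h n : ℕ∞) : WithBot ℕ∞) + auxL A ((maximalIdeal A) ^ n) ≤
      auxL A ((maximalIdeal A) ^ (n+1)) := by
    have := auxSandwich ((maximalIdeal A) ^ (n+1)) ((maximalIdeal A) ^ n)
      (Ideal.pow_le_pow_right (by omega))
    rwa [hh n] at this
  have h12 : ((h n : ℕ∞) : WithBot ℕ∞) + ((k : ℕ∞) : WithBot ℕ∞) ≤
      ((k : ℕ∞) : WithBot ℕ∞) + ((auxP ℓ d n : ℕ∞) : WithBot ℕ∞) := by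
    rw [← hk]
    exact le_trans hsand (hincr n)
  have hnat : h n + k ≤ k + auxP ℓ d n := by exact_mod_cast h12
  exact le_trans (by omega : h n ≤ auxP ℓ d n) (auxP_le ℓ d n hd)
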